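/- For the two-parameter model y(t; A, ω) = A cos(ωt) with decomposition ỹ(φ; A) = A cos(φ) and φ(t; ω) = ωt, the quadratic phase-space cost C^φ(A, ω) = (1/2T)∫₀ᵀ [ (A₀cos(ω₀t) − A cos(ω₀t)) + (−A₀ sin(ω₀t))(ω₀t − ωt) ]² dt is a polynomial of degree 2 in (A, ω) whose Hessian is positive definite for T > 0 (whenever A₀ ≠ 0), hence C^φ has a unique global minimum at (A₀, ω₀) and no other critical points. -/

import Mathlib

open MeasureTheory

private lemma stmt_18_key_pos (A₀ ω₀ T : ℝ) (hA₀ : A₀ ≠ 0) (hω₀ : ω₀ ≠ 0) (hT : 0 < T) (a b : ℝ)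
    (hab : ¬ (a = 0 ∧ b = 0)) :
    0 < ∫ t in (0:ℝ)..T, (a * Real.cos (ω₀*t) - b * (A₀ * t * Real.sin (ω₀*t)))^2 := by
  set h : ℝ → ℝ := fun t => a * Real.cos (ω₀*t) - b * (A₀ * t * Real.sin (ω₀*t)) with hh
  have hcont : Continuous h := by fun_prop
  have hint : IntervalIntegrable (fun t => h t ^ 2) volume 0 T :=
    (hcont.pow 2).intervalIntegrable 0 T
  have hnn : 0 ≤ ∫ t in (0:ℝ)..T, h t ^ 2 :=
    intervalIntegral.integral_nonneg hT.le (fun t _ => sq_nonneg _)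
  rcases hnn.lt_or_eq with hlt | heq
  · exact hlt
  exfalso
  have hae : (fun t => h t ^2) =ᵐ[volume.restrict (Set.Ioc (0:ℝ) T)] 0 := by
    rw [← intervalIntegral.integral_eq_zero_iff_of_le_of_nonneg_ae hT.le
      (Filter.Eventually.of_forall fun t => sq_nonneg _) hint]
    exact heq.symm
  have hzero : ∀ t ∈ Set.Ioo (0:ℝ) T, h t = 0 := by
    intro t ht
    by_contra hne
    have hopen : IsOpen ({t | h t ≠ 0} ∩ Set.Ioo 0 T) :=
      ((isOpen_ne.preimage hcont).inter isOpen_Ioo)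
    have hpos : 0 < volume ({t | h t ≠ 0} ∩ Set.Ioo 0 T) :=
      hopen.measure_pos volume ⟨t, hne, ht⟩
    have hnull : volume ({t | h t ≠ 0} ∩ Set.Ioo 0 T) = 0 := by
      have h0 := ae_iff.mp hae
      rw [Measure.restrict_apply' measurableSet_Ioc] at h0
      simp only [Pi.zero_apply] at h0
      refine measure_mono_null ?_ h0
      intro x hx
      exact ⟨by simp [pow_eq_zero_iff]; exact hx.1, Set.Ioo_subset_Ioc_self hx.2⟩
    exact hpos.ne' hnull
  have hIcc : ∀ t ∈ Set.Icc (0:ℝ) T, h t = 0 := by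
    have hEq : Set.EqOn h 0 (Set.Ioo (0:ℝ) T) := fun x hx => hzero x hx
    have := hEq.closure hcont continuous_const
    intro t ht
    exact this (by rwa [closure_Ioo hT.ne])
  have ha : a = 0 := by
    have := hIcc 0 ⟨le_refl _, hT.le⟩
    simpa [hh] using this
  set t₀ : ℝ := min (T/2) (Real.pi / (2 * |ω₀|)) with ht₀
  have hω₀' : 0 < |ω₀| := abs_pos.mpr hω₀
  have ht₀pos : 0 < t₀ := lt_min (by linarith) (by positivity)
  have ht₀T : t₀ < T := lt_of_le_of_lt (min_le_left _ _) (by linarith)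
  have hsin : Real.sin (ω₀ * t₀) ≠ 0 := by
    have h1 : |ω₀| * t₀ ≤ Real.pi / 2 := by
      have : t₀ ≤ Real.pi / (2 * |ω₀|) := min_le_right _ _
      calc |ω₀| * t₀ ≤ |ω₀| * (Real.pi / (2 * |ω₀|)) := by nlinarith
        _ = Real.pi / 2 := by field_simp
    have h2 : 0 < Real.sin (|ω₀| * t₀) :=
      Real.sin_pos_of_pos_of_lt_pi (by positivity)
        (lt_of_le_of_lt h1 (by linarith [Real.pi_pos]))
    rcases abs_cases ω₀ with ⟨he, _⟩ | ⟨he, _⟩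
    · rw [he] at h2; exact ne_of_gt h2
    · rw [he] at h2
      rw [show -ω₀ * t₀ = -(ω₀ * t₀) by ring, Real.sin_neg] at h2
      intro hc; rw [hc] at h2; simp at h2
  have hb : b = 0 := by
    have := hIcc t₀ ⟨ht₀pos.le, ht₀T.le⟩
    rw [hh] at this
    simp only [ha, zero_mul, zero_sub, neg_eq_zero] at this
    rcases mul_eq_zero.mp this with h' | h'
    · exact h'
    · exfalso
      rcases mul_eq_zero.mp h' with h'' | h''
      · rcases mul_eq_zero.mp h'' with h3 | h3
        · exact hA₀ h3
        · exact ht₀pos.ne' h3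
      · exact hsin h''
  exact hab ⟨ha, hb⟩

private lemma stmt_18_expand (A₀ ω₀ T : ℝ) (a b : ℝ) :
    (1/(2*T)) * (∫ t in (0:ℝ)..T, (a * Real.cos (ω₀*t) - b * (A₀ * t * Real.sin (ω₀*t)))^2)
      = ((1/(2*T)) * ∫ t in (0:ℝ)..T, (Real.cos (ω₀*t))^2) * a^2
        + (-(1/T) * ∫ t in (0:ℝ)..T, Real.cos (ω₀*t) * (A₀ * t * Real.sin (ω₀*t))) * (a*b)
        + ((1/(2*T)) * ∫ t in (0:ℝ)..T, (A₀ * t * Real.sin (ω₀*t))^2) * b^2 := by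
  have hc : Continuous fun t => Real.cos (ω₀*t) := by fun_prop
  have hs : Continuous fun t : ℝ => A₀ * t * Real.sin (ω₀*t) := by fun_prop
  have i1 : IntervalIntegrable (fun t => a^2 * (Real.cos (ω₀*t))^2) volume 0 T :=
    (continuous_const.mul (hc.pow 2)).intervalIntegrable 0 T
  have i2 : IntervalIntegrable (fun t => (2*a*b) * (Real.cos (ω₀*t) * (A₀ * t * Real.sin (ω₀*t)))) volume 0 T :=
    (continuous_const.mul (hc.mul hs)).intervalIntegrable 0 T
  have i3 : IntervalIntegrable (fun t => b^2 * (A₀ * t * Real.sin (ω₀*t))^2) volume 0 T :=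
    (continuous_const.mul (hs.pow 2)).intervalIntegrable 0 T
  have e : ∀ t : ℝ, (a * Real.cos (ω₀*t) - b * (A₀ * t * Real.sin (ω₀*t)))^2
      = a^2 * (Real.cos (ω₀*t))^2 - (2*a*b) * (Real.cos (ω₀*t) * (A₀ * t * Real.sin (ω₀*t)))
        + b^2 * (A₀ * t * Real.sin (ω₀*t))^2 := fun t => by ring
  simp_rw [e]
  rw [intervalIntegral.integral_add (i1.sub i2) i3, intervalIntegral.integral_sub i1 i2,
    intervalIntegral.integral_const_mul, intervalIntegral.integral_const_mul,
    intervalIntegral.integral_const_mul]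
  ring

theorem stmt_18 (A₀ ω₀ T : ℝ) (hA₀ : A₀ ≠ 0) (hω₀ : ω₀ ≠ 0) (hT : 0 < T)
    (Cφ : ℝ × ℝ → ℝ)
    (hCφ : ∀ A ω : ℝ, Cφ (A, ω) = (1 / (2 * T)) * ∫ t in (0:ℝ)..T,
      ((A₀ * Real.cos (ω₀ * t) - A * Real.cos (ω₀ * t))
        + (-(A₀ * Real.sin (ω₀ * t))) * (ω₀ * t - ω * t)) ^ 2) :
    (∀ v : ℝ × ℝ, v ≠ 0 → 0 < iteratedFDeriv ℝ 2 Cφ (A₀, ω₀) ![v, v]) ∧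
    (∀ p : ℝ × ℝ, Cφ (A₀, ω₀) ≤ Cφ p ∧ (Cφ p = Cφ (A₀, ω₀) → p = (A₀, ω₀))) ∧
    (∀ p : ℝ × ℝ, fderiv ℝ Cφ p = 0 → p = (A₀, ω₀)) := by
  set α : ℝ := (1/(2*T)) * ∫ t in (0:ℝ)..T, (Real.cos (ω₀*t))^2 with hα
  set β : ℝ := -(1/T) * ∫ t in (0:ℝ)..T, Real.cos (ω₀*t) * (A₀ * t * Real.sin (ω₀*t)) with hβ
  set γ : ℝ := (1/(2*T)) * ∫ t in (0:ℝ)..T, (A₀ * t * Real.sin (ω₀*t))^2 with hγ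
  have hQ : ∀ a b : ℝ,
      (1/(2*T)) * (∫ t in (0:ℝ)..T, (a * Real.cos (ω₀*t) - b * (A₀ * t * Real.sin (ω₀*t)))^2)
        = α*a^2 + β*(a*b) + γ*b^2 := by
    intro a b
    rw [hα, hβ, hγ]
    exact stmt_18_expand A₀ ω₀ T a b
  have hQpos : ∀ a b : ℝ, ¬ (a = 0 ∧ b = 0) → 0 < α*a^2 + β*(a*b) + γ*b^2 := by
    intro a b hab
    rw [← hQ a b]
    have h1 : 0 < 1/(2*T) := by positivity
    exact mul_pos h1 (stmt_18_key_pos A₀ ω₀ T hA₀ hω₀ hT a b hab)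
  -- Cφ is the quadratic polynomial F
  set F : ℝ × ℝ → ℝ := fun p => α * ((p.1-A₀)*(p.1-A₀)) + β * ((p.1-A₀)*(p.2-ω₀))
      + γ * ((p.2-ω₀)*(p.2-ω₀)) with hF
  have hCφ' : Cφ = F := by
    funext p
    have h0 := hCφ p.1 p.2
    rw [Prod.mk.eta] at h0
    rw [h0]
    have e : ∀ t : ℝ, ((A₀ * Real.cos (ω₀ * t) - p.1 * Real.cos (ω₀ * t))
          + (-(A₀ * Real.sin (ω₀ * t))) * (ω₀ * t - p.2 * t)) ^ 2
        = ((p.1 - A₀) * Real.cos (ω₀*t) - (p.2 - ω₀) * (A₀ * t * Real.sin (ω₀*t)))^2 :=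
      fun t => by ring
    simp_rw [e]
    rw [show (1:ℝ) / (2*T) = 1/(2*T) by norm_num, hQ (p.1 - A₀) (p.2 - ω₀), hF]
    ring
  -- derivative machinery
  set fst' := ContinuousLinearMap.fst ℝ ℝ ℝ with hfst'
  set snd' := ContinuousLinearMap.snd ℝ ℝ ℝ with hsnd'
  set D : (ℝ×ℝ) →L[ℝ] ((ℝ×ℝ) →L[ℝ] ℝ) :=
    (((2*α) • fst' + β • snd').smulRight fst') + ((β • fst' + (2*γ) • snd').smulRight snd') with hDdef
  have hD : ∀ v w : ℝ × ℝ, D v w = (2*α*v.1 + β*v.2)*w.1 + (β*v.1 + 2*γ*v.2)*w.2 := by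
    intro v w
    simp [hDdef, hfst', hsnd', smul_eq_mul]
  have hderiv : ∀ p : ℝ × ℝ, HasFDerivAt F (D (p - (A₀, ω₀))) p := by
    intro p
    have h1 : HasFDerivAt (fun p : ℝ×ℝ => p.1 - A₀) fst' p := (hasFDerivAt_fst).sub_const A₀
    have h2 : HasFDerivAt (fun p : ℝ×ℝ => p.2 - ω₀) snd' p := (hasFDerivAt_snd).sub_const ω₀
    have h := (((h1.mul h1).const_mul α).add ((h1.mul h2).const_mul β)).add
      ((h2.mul h2).const_mul γ)
    refine h.congr_fderiv ?_
    apply ContinuousLinearMap.ext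
    intro w
    rw [hD]
    simp [hfst', hsnd', smul_eq_mul, Prod.fst_sub, Prod.snd_sub]
    ring
  have hfd : fderiv ℝ F = fun p => D (p - (A₀, ω₀)) := funext fun p => (hderiv p).fderiv
  have hsnd2 : fderiv ℝ (fderiv ℝ F) (A₀, ω₀) = D := by
    rw [hfd]
    have he : (fun p : ℝ×ℝ => D (p - (A₀, ω₀))) = fun p => D p - D (A₀, ω₀) :=
      funext fun p => by rw [map_sub]
    rw [he]
    exact (D.hasFDerivAt.sub_const (D (A₀, ω₀))).fderiv
  have hne : ∀ p : ℝ × ℝ, p ≠ (A₀, ω₀) → ¬ (p.1 - A₀ = 0 ∧ p.2 - ω₀ = 0) := by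
    intro p hp hc
    exact hp (Prod.ext (sub_eq_zero.mp hc.1) (sub_eq_zero.mp hc.2))
  clear hQ hCφ hα hβ hγ
  clear_value α β γ
  refine ⟨?_, ?_, ?_⟩
  · -- positive definite Hessian
    intro v hv
    rw [hCφ', iteratedFDeriv_two_apply]
    simp only [Matrix.cons_val_zero, Matrix.cons_val_one, Matrix.head_cons]
    rw [hsnd2, hD]
    have hv' : ¬ (v.1 = 0 ∧ v.2 = 0) := by
      intro hc; exact hv (Prod.ext hc.1 hc.2)
    have hq := hQpos v.1 v.2 hv'
    have he : (2*α*v.1 + β*v.2)*v.1 + (β*v.1 + 2*γ*v.2)*v.2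
        = 2*(α*v.1^2 + β*(v.1*v.2) + γ*v.2^2) := by ring
    rw [he]
    linarith
  · -- global minimum
    intro p
    have h0 : Cφ (A₀, ω₀) = 0 := by rw [hCφ', hF]; simp
    by_cases hp : p = (A₀, ω₀)
    · subst hp; exact ⟨le_refl _, fun _ => rfl⟩
    · have hpos : 0 < Cφ p := by
        have hq := hQpos (p.1 - A₀) (p.2 - ω₀) (hne p hp)
        have he : Cφ p = α*(p.1-A₀)^2 + β*((p.1-A₀)*(p.2-ω₀)) + γ*(p.2-ω₀)^2 := by
          rw [hCφ', hF]; ring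
        rw [he]
        linarith
      refine ⟨by linarith, fun he => ?_⟩
      rw [h0] at he
      exact absurd he hpos.ne'
  · -- no other critical points
    intro p hcrit
    rw [hCφ', hfd] at hcrit
    by_contra hp
    have hcrit' : D (p - (A₀, ω₀)) = 0 := hcrit
    have h1 := hD (p - (A₀, ω₀)) (1, 0)
    have h2 := hD (p - (A₀, ω₀)) (0, 1)
    rw [hcrit'] at h1 h2
    simp only [ContinuousLinearMap.zero_apply, Prod.fst_sub, Prod.snd_sub] at h1 h2
    have e1 : 2*α*(p.1 - A₀) + β*(p.2 - ω₀) = 0 := by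
      have := h1.symm; simpa using this
    have e2 : β*(p.1 - A₀) + 2*γ*(p.2 - ω₀) = 0 := by
      have := h2.symm; simpa using this
    have hq := hQpos (p.1 - A₀) (p.2 - ω₀) (hne p hp)
    have he : 2*(α*(p.1-A₀)^2 + β*((p.1-A₀)*(p.2-ω₀)) + γ*(p.2-ω₀)^2)
        = (p.1-A₀)*(2*α*(p.1 - A₀) + β*(p.2 - ω₀)) + (p.2-ω₀)*(β*(p.1 - A₀) + 2*γ*(p.2 - ω₀)) := by
      ring
    rw [e1, e2] at he
    simp at he
    linarith
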